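/- Let F be a standard Borel space, let m ∈ ℕ, and let G₁, …, G_m ⊆ F be measurable sets. Then the parallel-step relation {(S, T) ∈ Finset F × Finset F : ∃ x₁ ∈ G₁, …, x_m ∈ G_m with T = S ∪ {x₁, …, x_m}} is measurable in the product σ-algebra 𝔻 ⊗ 𝔻 of the instance space with itself. -/

import Mathlib

open MeasureTheory
open scoped ENNReal

/-- The canonical embedding of a database instance (a finite set of facts)
into the space of measures: `S ↦ ∑_{x ∈ S} δ_x`. -/
noncomputable def iota {F : Type*} [MeasurableSpace F] (S : Finset F) : Measure F :=
  ∑ x ∈ S, Measure.dirac x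

/-- The instance space `𝔻`: `Finset F` equipped with the σ-algebra comapped along `ι`
from the canonical σ-algebra on `Measure F`. -/
noncomputable instance instanceSpace (F : Type*) [MeasurableSpace F] : MeasurableSpace (Finset F) :=
  MeasurableSpace.comap iota inferInstance

open scoped Classical in
noncomputable def ncnt {F : Type*} (S : Finset F) (A : Set F) : ℕ :=
  (S.filter (fun x => x ∈ A)).card

def patom {F : Type*} (A : ℕ → Set F) (n : ℕ) (b : Fin n → Bool) : Set F :=
  {x | ∀ k : Fin n, x ∈ A (k : ℕ) ↔ b k = true}

open scoped Classical in
noncomputable def psig {F : Type*} (A : ℕ → Set F) (n : ℕ) (x : F) : Fin n → Bool :=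
  fun k => decide (x ∈ A (k : ℕ))

section Aux
variable {F : Type*} [MeasurableSpace F]

lemma measurable_iota : Measurable (iota : Finset F → Measure F) :=
  measurable_iff_comap_le.2 le_rfl

lemma iota_apply (S : Finset F) {A : Set F} (hA : MeasurableSet A) :
    iota S A = (ncnt S A : ℝ≥0∞) := by
  classical
  rw [iota, Measure.finset_sum_apply, ncnt, Finset.card_filter]
  rw [Nat.cast_sum]
  refine Finset.sum_congr rfl fun x _ => ?_
  rw [Measure.dirac_apply' _ hA, Set.indicator_apply]
  split_ifs with h1 <;> simp [h1]

lemma measurable_ncnt {A : Set F} (hA : MeasurableSet A) :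
    Measurable (fun S : Finset F => (ncnt S A : ℝ≥0∞)) := by
  have h : (fun S : Finset F => (ncnt S A : ℝ≥0∞)) = fun S => iota S A :=
    funext fun S => (iota_apply S hA).symm
  rw [h]
  exact (Measure.measurable_coe hA).comp measurable_iota

end Aux

section Cnt
variable {F : Type*}

lemma ncnt_eq_zero {S : Finset F} {A : Set F} : ncnt S A = 0 ↔ ∀ x ∈ S, x ∉ A := by
  classical
  simp [ncnt, Finset.card_eq_zero, Finset.filter_eq_empty_iff]

lemma one_le_ncnt {S : Finset F} {A : Set F} : 1 ≤ ncnt S A ↔ ∃ x ∈ S, x ∈ A := by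
  classical
  rw [ncnt, Nat.one_le_iff_ne_zero, Ne, Finset.card_eq_zero, ← Ne,
    ← Finset.nonempty_iff_ne_empty]
  simp [Finset.filter_nonempty_iff]

lemma ncnt_le_one {S : Finset F} {A : Set F} :
    ncnt S A ≤ 1 ↔ ∀ x ∈ S, x ∈ A → ∀ y ∈ S, y ∈ A → x = y := by
  classical
  rw [ncnt, Finset.card_le_one]
  constructor
  · intro h x hx hxA y hy hyA
    exact h x (Finset.mem_filter.2 ⟨hx, hxA⟩) y (Finset.mem_filter.2 ⟨hy, hyA⟩)
  · intro h a ha b hb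
    rw [Finset.mem_filter] at ha hb
    exact h a ha.1 ha.2 b hb.1 hb.2

lemma ncnt_mono {S T : Finset F} {A : Set F} (h : S ⊆ T) : ncnt S A ≤ ncnt T A := by
  classical
  exact Finset.card_le_card (Finset.filter_subset_filter _ h)

lemma mem_patom_psig {A : ℕ → Set F} {n : ℕ} {x : F} :
    x ∈ patom A n (psig A n x) := fun k => by simp [psig]

lemma psig_eq_of_mem_patom {A : ℕ → Set F} {n : ℕ} {x : F} {b : Fin n → Bool}
    (h : x ∈ patom A n b) : psig A n x = b := by
  funext k
  have hk := h k
  cases hbk : b k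
  · simp only [hbk, Bool.false_eq_true, iff_false] at hk
    simp [psig, hk]
  · simp only [hbk, iff_true] at hk
    simp [psig, hk]

end Cnt

lemma measurableSet_patom {F : Type*} [MeasurableSpace F] {A : ℕ → Set F}
    (hA : ∀ k, MeasurableSet (A k)) (n : ℕ) (b : Fin n → Bool) :
    MeasurableSet (patom A n b) := by
  have h : patom A n b = ⋂ k : Fin n, (if b k = true then A (k : ℕ) else (A (k : ℕ))ᶜ) := by
    ext x
    simp only [patom, Set.mem_setOf_eq, Set.mem_iInter]
    refine forall_congr' fun k => ?_
    by_cases h : b k = true <;> simp [h]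
  rw [h]
  exact MeasurableSet.iInter fun k => by
    by_cases h : b k = true <;> simp [h, hA (k : ℕ), (hA (k : ℕ)).compl]

lemma exists_separating_seq (F : Type*) [MeasurableSpace F] [StandardBorelSpace F] :
    ∃ A : ℕ → Set F, (∀ n, MeasurableSet (A n)) ∧
      ∀ x y : F, x ≠ y → ∃ n, ¬ (x ∈ A n ↔ y ∈ A n) := by
  obtain ⟨f, hf⟩ := exists_measurableEmbedding_real F
  obtain ⟨e, he⟩ := exists_surjective_nat ℚ
  refine ⟨fun n => f ⁻¹' (Set.Ioi ((e n : ℚ) : ℝ)),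
    fun n => hf.measurable measurableSet_Ioi, ?_⟩
  intro x y hxy
  have hfxy : f x ≠ f y := fun h => hxy (hf.injective h)
  rcases lt_or_gt_of_ne hfxy with h | h
  · obtain ⟨q, hq1, hq2⟩ := exists_rat_btwn h
    obtain ⟨nq, rfl⟩ := he q
    refine ⟨nq, ?_⟩
    simp only [Set.mem_preimage, Set.mem_Ioi]
    intro hiff
    exact absurd (hiff.2 hq2) (not_lt.2 hq1.le)
  · obtain ⟨q, hq1, hq2⟩ := exists_rat_btwn h
    obtain ⟨nq, rfl⟩ := he q
    refine ⟨nq, ?_⟩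
    simp only [Set.mem_preimage, Set.mem_Ioi]
    intro hiff
    exact absurd (hiff.1 hq2) (not_lt.2 hq1.le)

/-- For measurable sets of facts `G₁, …, G_m ⊆ F`, the parallel-step relation
`{(S, T) : ∃ x₁ ∈ G₁, …, x_m ∈ G_m, T = S ∪ {x₁, …, x_m}}` is measurable in the
product σ-algebra `𝔻 ⊗ 𝔻` of the instance space with itself. -/
theorem measurableSet_parallelStepRelation (F : Type*) [MeasurableSpace F]
    [StandardBorelSpace F] [DecidableEq F] (m : ℕ)
    (G : Fin m → Set F) (hG : ∀ i, MeasurableSet (G i)) :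
    MeasurableSet
      {p : Finset F × Finset F | ∃ v : Fin m → F,
        (∀ i, v i ∈ G i) ∧ p.2 = p.1 ∪ Finset.image v Finset.univ} := by
  classical
  obtain ⟨A, hA, hsep⟩ := exists_separating_seq F
  have key : ∀ T : Finset F, ∃ n : ℕ, ∀ x ∈ T, ∀ y ∈ T, x ≠ y →
      ∀ b : Fin n → Bool, x ∈ patom A n b → y ∈ patom A n b → False := by
    intro T
    have hchoice : ∀ q : F × F, ∃ n : ℕ, q.1 ≠ q.2 → ¬ (q.1 ∈ A n ↔ q.2 ∈ A n) := by
      intro q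
      by_cases h : q.1 = q.2
      · exact ⟨0, fun h' => absurd h h'⟩
      · obtain ⟨n, hn⟩ := hsep _ _ h
        exact ⟨n, fun _ => hn⟩
    choose φ hφ using hchoice
    refine ⟨(T ×ˢ T).sup (fun q => φ q + 1), ?_⟩
    intro x hx y hy hxy b hxb hyb
    have hmem : (x, y) ∈ T ×ˢ T := Finset.mem_product.2 ⟨hx, hy⟩
    have hlt : φ (x, y) < (T ×ˢ T).sup (fun q => φ q + 1) :=
      lt_of_lt_of_le (Nat.lt_succ_self _) (Finset.le_sup (f := fun q => φ q + 1) hmem)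
    have h1 := hxb ⟨φ (x, y), hlt⟩
    have h2 := hyb ⟨φ (x, y), hlt⟩
    exact hφ (x, y) hxy (h1.trans h2.symm)
  have hset : {p : Finset F × Finset F | ∃ v : Fin m → F,
        (∀ i, v i ∈ G i) ∧ p.2 = p.1 ∪ Finset.image v Finset.univ}
      = (⋂ n, ⋂ b : Fin n → Bool,
          {p : Finset F × Finset F | ncnt p.1 (patom A n b) ≤ ncnt p.2 (patom A n b)})
        ∩ ⋃ n, ⋃ c : Fin m → Fin n → Bool,
          (((⋂ b : Fin n → Bool, {p : Finset F × Finset F | ncnt p.2 (patom A n b) ≤ 1})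
           ∩ (⋂ i : Fin m, {p : Finset F × Finset F | 1 ≤ ncnt p.2 (G i ∩ patom A n (c i))}))
           ∩ (⋂ b : Fin n → Bool, {p : Finset F × Finset F |
               1 ≤ ncnt p.2 (patom A n b) → ncnt p.1 (patom A n b) = 0 → ∃ i, c i = b})) := by
    ext ⟨S, T⟩
    simp only [Set.mem_setOf_eq, Set.mem_inter_iff, Set.mem_iInter, Set.mem_iUnion]
    constructor
    · rintro ⟨v, hv, rfl⟩
      obtain ⟨n, hn⟩ := key (S ∪ Finset.image v Finset.univ)
      refine ⟨fun n b => ncnt_mono Finset.subset_union_left, n, fun i => psig A n (v i),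
        ⟨⟨?_, ?_⟩, ?_⟩⟩
      · intro b
        rw [ncnt_le_one]
        intro x hx hxA y hy hyA
        by_contra hne
        exact hn x hx y hy hne b hxA hyA
      · intro i
        rw [one_le_ncnt]
        exact ⟨v i, Finset.mem_union_right _ (Finset.mem_image.2 ⟨i, Finset.mem_univ i, rfl⟩),
          ⟨hv i, mem_patom_psig⟩⟩
      · intro b h1 h0
        obtain ⟨t, htT, htb⟩ := one_le_ncnt.1 h1
        have htS : t ∉ S := fun hs => (ncnt_eq_zero.1 h0 t hs) htb
        have htI : t ∈ Finset.image v Finset.univ := by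
          rcases Finset.mem_union.1 htT with h | h
          · exact absurd h htS
          · exact h
        obtain ⟨i, -, rfl⟩ := Finset.mem_image.1 htI
        exact ⟨i, psig_eq_of_mem_patom htb⟩
    · rintro ⟨hsub, n, c, ⟨hle1, hone⟩, hcov⟩
      have hST : S ⊆ T := by
        intro s hs
        by_contra hsT
        obtain ⟨n₀, hn₀⟩ := key (insert s T)
        have h1 : 1 ≤ ncnt S (patom A n₀ (psig A n₀ s)) :=
          one_le_ncnt.2 ⟨s, hs, mem_patom_psig⟩
        have h0 : ncnt T (patom A n₀ (psig A n₀ s)) = 0 :=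
          ncnt_eq_zero.2 (fun t ht htb =>
            hn₀ s (Finset.mem_insert_self s T) t (Finset.mem_insert_of_mem ht)
              (fun he => hsT (he ▸ ht)) _ mem_patom_psig htb)
        have := hsub n₀ (psig A n₀ s)
        omega
      have hv : ∀ i : Fin m, ∃ x ∈ T, x ∈ G i ∩ patom A n (c i) :=
        fun i => one_le_ncnt.1 (hone i)
      choose v hvT hvG using hv
      refine ⟨v, fun i => (hvG i).1, ?_⟩
      apply Finset.Subset.antisymm
      · intro t ht
        by_cases htS : t ∈ S
        · exact Finset.mem_union_left _ htS
        · have h1 : 1 ≤ ncnt T (patom A n (psig A n t)) :=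
            one_le_ncnt.2 ⟨t, ht, mem_patom_psig⟩
          have h0 : ncnt S (patom A n (psig A n t)) = 0 := by
            refine ncnt_eq_zero.2 (fun s hs hsb => ?_)
            have hst : s = t :=
              (ncnt_le_one.1 (hle1 _)) s (hST hs) hsb t ht mem_patom_psig
            exact htS (hst ▸ hs)
          obtain ⟨i, hi⟩ := hcov _ h1 h0
          have hvt : v i = t :=
            (ncnt_le_one.1 (hle1 _)) (v i) (hvT i) (hi ▸ (hvG i).2) t ht mem_patom_psig
          exact Finset.mem_union_right _ (Finset.mem_image.2 ⟨i, Finset.mem_univ i, hvt⟩)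
      · exact Finset.union_subset hST (fun x hx => by
          obtain ⟨i, -, rfl⟩ := Finset.mem_image.1 hx
          exact hvT i)
  rw [hset]
  have mle : ∀ {B : Set F}, MeasurableSet B →
      MeasurableSet {p : Finset F × Finset F | ncnt p.1 B ≤ ncnt p.2 B} := by
    intro B hB
    have h : {p : Finset F × Finset F | ncnt p.1 B ≤ ncnt p.2 B}
        = {p : Finset F × Finset F | ((ncnt p.1 B : ℝ≥0∞)) ≤ (ncnt p.2 B : ℝ≥0∞)} := by
      ext p; simp [Nat.cast_le]
    rw [h]
    exact measurableSet_le ((measurable_ncnt hB).comp measurable_fst)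
      ((measurable_ncnt hB).comp measurable_snd)
  have msndle1 : ∀ {B : Set F}, MeasurableSet B →
      MeasurableSet {p : Finset F × Finset F | ncnt p.2 B ≤ 1} := by
    intro B hB
    have h : {p : Finset F × Finset F | ncnt p.2 B ≤ 1}
        = (fun p : Finset F × Finset F => (ncnt p.2 B : ℝ≥0∞)) ⁻¹' (Set.Iic 1) := by
      ext p
      simp only [Set.mem_setOf_eq, Set.mem_preimage, Set.mem_Iic]
      rw [show (1 : ℝ≥0∞) = ((1 : ℕ) : ℝ≥0∞) by simp, Nat.cast_le]
    rw [h]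
    exact ((measurable_ncnt hB).comp measurable_snd) measurableSet_Iic
  have monelesnd : ∀ {B : Set F}, MeasurableSet B →
      MeasurableSet {p : Finset F × Finset F | 1 ≤ ncnt p.2 B} := by
    intro B hB
    have h : {p : Finset F × Finset F | 1 ≤ ncnt p.2 B}
        = (fun p : Finset F × Finset F => (ncnt p.2 B : ℝ≥0∞)) ⁻¹' (Set.Ici 1) := by
      ext p
      simp only [Set.mem_setOf_eq, Set.mem_preimage, Set.mem_Ici]
      rw [show (1 : ℝ≥0∞) = ((1 : ℕ) : ℝ≥0∞) by simp, Nat.cast_le]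
    rw [h]
    exact ((measurable_ncnt hB).comp measurable_snd) measurableSet_Ici
  have mfst0 : ∀ {B : Set F}, MeasurableSet B →
      MeasurableSet {p : Finset F × Finset F | ncnt p.1 B = 0} := by
    intro B hB
    have h : {p : Finset F × Finset F | ncnt p.1 B = 0}
        = (fun p : Finset F × Finset F => (ncnt p.1 B : ℝ≥0∞)) ⁻¹' {0} := by
      ext p
      simp [Nat.cast_eq_zero]
    rw [h]
    exact ((measurable_ncnt hB).comp measurable_fst) (measurableSet_singleton 0)
  apply MeasurableSet.inter
  · exact MeasurableSet.iInter fun n => MeasurableSet.iInter fun b =>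
      mle (measurableSet_patom hA n b)
  · refine MeasurableSet.iUnion fun n => MeasurableSet.iUnion fun c => ?_
    refine MeasurableSet.inter (MeasurableSet.inter ?_ ?_) ?_
    · exact MeasurableSet.iInter fun b => msndle1 (measurableSet_patom hA n b)
    · exact MeasurableSet.iInter fun i =>
        monelesnd ((hG i).inter (measurableSet_patom hA n (c i)))
    · refine MeasurableSet.iInter fun b => ?_
      by_cases hR : ∃ i, c i = b
      · have h : {p : Finset F × Finset F |
            1 ≤ ncnt p.2 (patom A n b) → ncnt p.1 (patom A n b) = 0 → ∃ i, c i = b}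
            = Set.univ := by
          ext p; simp [hR]
        rw [h]; exact MeasurableSet.univ
      · have h : {p : Finset F × Finset F |
            1 ≤ ncnt p.2 (patom A n b) → ncnt p.1 (patom A n b) = 0 → ∃ i, c i = b}
            = {p : Finset F × Finset F | 1 ≤ ncnt p.2 (patom A n b)}ᶜ
              ∪ {p : Finset F × Finset F | ncnt p.1 (patom A n b) = 0}ᶜ := by
          ext p
          simp only [Set.mem_setOf_eq, Set.mem_union, Set.mem_compl_iff, hR]
          tauto
        rw [h]
        exact ((monelesnd (measurableSet_patom hA n b)).compl).union
          ((mfst0 (measurableSet_patom hA n b)).compl)
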